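/- Let R be a finite local reflexive ring with Jacobson radical J = J(R) and residue field F = R/J a prime field (isomorphic to ZMod p for some prime p). Suppose the dimension of J/J² as an F-vector space is 2 and J⁴ = 0. Then R is semicommutative. -/

import Mathlib

open Pointwise

set_option maxHeartbeats 1000000

/-- A ring is reflexive if `aRb = 0` implies `bRa = 0`. -/
def IsReflexiveRing (R : Type*) [Ring R] : Prop :=
  ∀ a b : R, (∀ r : R, a * r * b = 0) → (∀ r : R, b * r * a = 0)

/-- A ring is semicommutative if `a*b = 0` implies `aRb = 0`. -/
def IsSemicommutativeRing (R : Type*) [Ring R] : Prop :=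
  ∀ a b : R, a * b = 0 → ∀ r : R, a * r * b = 0

/-- The `i`-th power of the Jacobson radical, as an additive subgroup: the additive
closure of the set of products of `i` elements of the Jacobson radical. -/
def jacobsonPow (R : Type*) [Ring R] (i : ℕ) : AddSubgroup R :=
  AddSubgroup.closure (((Ideal.jacobson (⊥ : Ideal R) : Ideal R) : Set R) ^ i)

/-- For a finite local ring with residue field of prime order `p`, the dimension of
`Jⁱ/J^(i+1)` over the residue field is `d` iff the index of `J^(i+1)` in `Jⁱ` is `p ^ d`. -/
def jacobsonFactorDim (R : Type*) [Ring R] (p i d : ℕ) : Prop :=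
  (jacobsonPow R (i + 1)).relIndex (jacobsonPow R i) = p ^ d

section Aux

variable {R : Type*} [Ring R] {p : ℕ} {f : R →+* ZMod p}

lemma Aux.memS (hker : RingHom.ker f = Ideal.jacobson (⊥ : Ideal R)) (x : R) :
    x ∈ ((Ideal.jacobson (⊥ : Ideal R) : Ideal R) : Set R) ↔ f x = 0 := by
  rw [← hker]; exact RingHom.mem_ker

lemma Aux.memK1 (hker : RingHom.ker f = Ideal.jacobson (⊥ : Ideal R)) (x : R) :
    x ∈ jacobsonPow R 1 ↔ f x = 0 := by
  unfold jacobsonPow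
  rw [pow_one]
  constructor
  · intro hx
    induction hx using AddSubgroup.closure_induction with
    | mem y hy => exact (Aux.memS hker y).1 hy
    | zero => exact map_zero f
    | add x y _ _ hx hy => simp [map_add, hx, hy]
    | neg x _ hx => simp [hx]
  · intro hx
    exact AddSubgroup.subset_closure ((Aux.memS hker x).2 hx)

lemma Aux.mulK {i j k : ℕ} {x y : R} (hx : x ∈ jacobsonPow R i) (hy : y ∈ jacobsonPow R j)
    (hk : i + j = k) : x * y ∈ jacobsonPow R k := by
  subst hk
  unfold jacobsonPow at *
  induction hx using AddSubgroup.closure_induction with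
  | mem s hs =>
    induction hy using AddSubgroup.closure_induction with
    | mem t ht => exact AddSubgroup.subset_closure (by rw [pow_add]; exact Set.mul_mem_mul hs ht)
    | zero => simpa using (AddSubgroup.zero_mem _)
    | add u v _ _ hu hv => rw [mul_add]; exact AddSubgroup.add_mem _ hu hv
    | neg u _ hu => rw [mul_neg]; exact AddSubgroup.neg_mem _ hu
  | zero => simpa using (AddSubgroup.zero_mem _)
  | add u v _ _ hu hv => rw [add_mul]; exact AddSubgroup.add_mem _ hu hv
  | neg u _ hu => rw [neg_mul]; exact AddSubgroup.neg_mem _ hu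

lemma Aux.decompR (hp : p ≠ 0) (hker : RingHom.ker f = Ideal.jacobson (⊥ : Ideal R)) (r : R) :
    ∃ n : ℕ, r - (n : R) ∈ jacobsonPow R 1 := by
  haveI : NeZero p := ⟨hp⟩
  refine ⟨(f r).val, (Aux.memK1 hker _).2 ?_⟩
  rw [map_sub, map_natCast, ZMod.natCast_val, ZMod.cast_id, sub_self]

lemma Aux.zsmul_memK (hker : RingHom.ker f = Ideal.jacobson (⊥ : Ideal R)) {N : ℤ}
    (hN : (N : ZMod p) = 0) {i k : ℕ} {x : R} (hx : x ∈ jacobsonPow R i) (hk : 1 + i = k) :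
    N • x ∈ jacobsonPow R k := by
  subst hk
  obtain ⟨k, rfl⟩ := (ZMod.intCast_zmod_eq_zero_iff_dvd N p).1 hN
  have hp1 : (p : R) ∈ jacobsonPow R 1 := (Aux.memK1 hker _).2 (by simp)
  have h2 : ((p : ℤ)) • x ∈ jacobsonPow R (1 + i) := by
    have h3 : (p : R) * x ∈ jacobsonPow R (1 + i) := Aux.mulK hp1 hx rfl
    simpa [zsmul_eq_mul] using h3
  rw [mul_comm, mul_zsmul]
  exact AddSubgroup.zsmul_mem _ h2 k

lemma Aux.rep (hp : p.Prime) (hker : RingHom.ker f = Ideal.jacobson (⊥ : Ideal R))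
    (hrel : (jacobsonPow R 2).relIndex (jacobsonPow R 1) = p ^ 2)
    {a : R} (ha1 : a ∈ jacobsonPow R 1) (ha2 : a ∉ jacobsonPow R 2) :
    ∃ y ∈ jacobsonPow R 1, ∀ x ∈ jacobsonPow R 1,
      ∃ c d : ZMod p, x - ((c.val : ℤ) • a + (d.val : ℤ) • y) ∈ jacobsonPow R 2 := by
  haveI : Fact p.Prime := ⟨hp⟩
  set K1 := jacobsonPow R 1
  set K2 := jacobsonPow R 2
  set H : AddSubgroup K1 := K2.addSubgroupOf K1 with hH
  set Q := K1 ⧸ H with hQ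
  have hcard : Nat.card Q = p ^ 2 := hrel
  have hQfin : Finite Q :=
    Nat.finite_of_card_ne_zero (by rw [hcard]; exact pow_ne_zero _ hp.ne_zero)
  have htor : ∀ q : Q, (p : ℤ) • q = 0 := by
    intro q
    obtain ⟨z, rfl⟩ := QuotientAddGroup.mk_surjective q
    rw [← QuotientAddGroup.mk_zsmul, QuotientAddGroup.eq_zero_iff]
    rw [hH, AddSubgroup.mem_addSubgroupOf]
    have h0 : (((p:ℤ) • z : K1) : R) = (p:ℤ) • (z:R) := rfl
    rw [h0]
    exact Aux.zsmul_memK hker (by simp) z.2 rfl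
  have hsmul : ∀ (N M : ℤ) (q : Q), (N : ZMod p) = (M : ZMod p) → N • q = M • q := by
    intro N M q h
    have h2 : ((N - M : ℤ) : ZMod p) = 0 := by push_cast [h]; ring
    obtain ⟨k, hk⟩ := (ZMod.intCast_zmod_eq_zero_iff_dvd _ p).1 h2
    have h3 : N • q - M • q = (N - M) • q := by
      rw [sub_zsmul, sub_eq_add_neg]
    rw [← sub_eq_zero, h3, hk, mul_comm, mul_zsmul, htor, zsmul_zero]
  have key : ∀ (N : ℤ) (q : Q), N • q = ((N : ZMod p).val : ℤ) • q := by
    intro N q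
    exact (hsmul _ N q (by rw [Int.cast_natCast, ZMod.natCast_val, ZMod.cast_id])).symm
  set abar : Q := QuotientAddGroup.mk ⟨a, ha1⟩ with habar
  have habar0 : abar ≠ 0 := by
    rw [habar, Ne, QuotientAddGroup.eq_zero_iff, hH, AddSubgroup.mem_addSubgroupOf]
    exact ha2
  have hline : ∃ yb : Q, ∀ c : ZMod p, (c.val : ℤ) • abar ≠ yb := by
    by_contra hco
    push_neg at hco
    have hs : Function.Surjective (fun c : ZMod p => (c.val : ℤ) • abar) := by
      intro q; obtain ⟨c, hc⟩ := hco q; exact ⟨c, hc⟩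
    have := Nat.card_le_card_of_surjective _ hs
    rw [hcard, Nat.card_eq_fintype_card, ZMod.card] at this
    nlinarith [hp.two_le]
  obtain ⟨ybar, hybar⟩ := hline
  set g : ZMod p × ZMod p → Q := fun cd => (cd.1.val : ℤ) • abar + (cd.2.val : ℤ) • ybar with hg
  have hginj : Function.Injective g := by
    rintro ⟨c, d⟩ ⟨c', d'⟩ hcd
    simp only [hg] at hcd
    have hdd : d = d' := by
      by_contra hne
      set e := d' - d with hedef
      have he : e ≠ 0 := sub_ne_zero_of_ne (Ne.symm hne)
      have h3 : (c.val : ℤ) • abar - (c'.val : ℤ) • abar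
          = (d'.val : ℤ) • ybar - (d.val : ℤ) • ybar := by
        rw [sub_eq_sub_iff_add_eq_add, hcd, add_comm]
      have heq : ((d'.val : ℤ) - (d.val : ℤ)) • ybar = ((c.val : ℤ) - (c'.val : ℤ)) • abar := by
        rw [sub_zsmul, sub_zsmul, ← sub_eq_add_neg, ← sub_eq_add_neg]
        exact h3.symm
      have h4 : ((e⁻¹.val : ℤ) * ((d'.val : ℤ) - (d.val : ℤ))) • ybar
          = ((e⁻¹.val : ℤ) * ((c.val : ℤ) - (c'.val : ℤ))) • abar := by
        rw [mul_zsmul, mul_zsmul, heq]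
      have h5 : ((e⁻¹.val : ℤ) * ((d'.val : ℤ) - (d.val : ℤ))) • ybar = ybar := by
        rw [hsmul _ 1 ybar ?_, one_zsmul]
        push_cast [ZMod.natCast_val, ZMod.cast_id]
        rw [← hedef, inv_mul_cancel₀ he]
      set N := (e⁻¹.val : ℤ) * ((c.val : ℤ) - (c'.val : ℤ)) with hN
      refine hybar (N : ZMod p) ?_
      rw [← key, ← h4]
      exact h5
    subst hdd
    have hcc' : (c.val : ℤ) • abar = (c'.val : ℤ) • abar := add_right_cancel hcd
    have hcc : c = c' := by
      by_contra hne
      set e := c - c' with hedef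
      have he : e ≠ 0 := sub_ne_zero_of_ne hne
      have heq : ((c.val : ℤ) - (c'.val : ℤ)) • abar = 0 := by
        rw [sub_zsmul, ← sub_eq_add_neg, sub_eq_zero]
        exact hcc'
      have h5 : ((e⁻¹.val : ℤ) * ((c.val : ℤ) - (c'.val : ℤ))) • abar = abar := by
        rw [hsmul _ 1 abar ?_, one_zsmul]
        push_cast [ZMod.natCast_val, ZMod.cast_id]
        rw [← hedef, inv_mul_cancel₀ he]
      rw [mul_zsmul, heq, zsmul_zero] at h5
      exact habar0 h5.symm
    exact Prod.ext hcc rfl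
  have hgsurj : Function.Surjective g := by
    haveI : Fintype Q := Fintype.ofFinite Q
    have hc2 : Fintype.card (ZMod p × ZMod p) = Fintype.card Q := by
      rw [Fintype.card_prod, ZMod.card, ← Nat.card_eq_fintype_card, hcard]; ring
    exact ((Fintype.bijective_iff_injective_and_card g).2 ⟨hginj, hc2⟩).2
  obtain ⟨⟨y, hy1⟩, hyeq⟩ := QuotientAddGroup.mk_surjective ybar
  refine ⟨y, hy1, ?_⟩
  intro x hx
  obtain ⟨⟨c, d⟩, hcd⟩ := hgsurj (QuotientAddGroup.mk ⟨x, hx⟩)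
  refine ⟨c, d, ?_⟩
  have hmk : QuotientAddGroup.mk (((c.val : ℤ) • (⟨a, ha1⟩ : K1) + (d.val : ℤ) • (⟨y, hy1⟩ : K1)))
      = (QuotientAddGroup.mk (⟨x, hx⟩ : K1) : Q) := by
    rw [QuotientAddGroup.mk_add, QuotientAddGroup.mk_zsmul, QuotientAddGroup.mk_zsmul, hyeq]
    exact hcd
  have hmem := (QuotientAddGroup.eq).1 hmk
  rw [hH, AddSubgroup.mem_addSubgroupOf] at hmem
  have hval : ((-((c.val : ℤ) • (⟨a, ha1⟩ : K1) + (d.val : ℤ) • (⟨y, hy1⟩ : K1))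
      + (⟨x, hx⟩ : K1) : K1) : R) = x - ((c.val : ℤ) • a + (d.val : ℤ) • y) := by
    push_cast
    exact (sub_eq_neg_add x _).symm
  rwa [hval] at hmem

lemma Aux.inv_expand {j : R} (h4 : j*j*j*j = 0) :
    (1+j)*(1-j+j*j-j*j*j) = 1 ∧ (1-j+j*j-j*j*j)*(1+j) = 1 := by
  constructor
  · have e : (1+j)*(1-j+j*j-j*j*j) = 1 - j*j*j*j := by noncomm_ring
    rw [e, h4, sub_zero]
  · have e : (1-j+j*j-j*j*j)*(1+j) = 1 - j*j*j*j := by noncomm_ring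
    rw [e, h4, sub_zero]

end Aux

theorem finite_local_reflexive_dim_two_j4_zero_semicommutative
    (R : Type*) [Ring R] [Finite R] [IsLocalRing R] (href : IsReflexiveRing R)
    (p : ℕ) (hp : p.Prime) (f : R →+* ZMod p) (hf : Function.Surjective f)
    (hker : RingHom.ker f = Ideal.jacobson (⊥ : Ideal R))
    (h1 : jacobsonFactorDim R p 1 2) (hJ4 : jacobsonPow R 4 = ⊥) :
    IsSemicommutativeRing R := by
  haveI : Fact p.Prime := ⟨hp⟩
  haveI : NeZero p := ⟨hp.ne_zero⟩
  have h1' : (jacobsonPow R 2).relIndex (jacobsonPow R 1) = p ^ 2 := by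
    unfold jacobsonFactorDim at h1
    norm_num at h1
    exact h1
  have k40 : ∀ x ∈ jacobsonPow R 4, x = 0 := by
    intro x hx; rw [hJ4] at hx; exact AddSubgroup.mem_bot.1 hx
  intro a b hab r
  by_cases hfa : f a = 0
  · by_cases hfb : f b = 0
    · -- main case : a, b ∈ J
      have ha1 : a ∈ jacobsonPow R 1 := (Aux.memK1 hker a).2 hfa
      have hb1 : b ∈ jacobsonPow R 1 := (Aux.memK1 hker b).2 hfb
      -- reduce to j ∈ J
      suffices hsuf : ∀ j ∈ jacobsonPow R 1, a * j * b = 0 by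
        obtain ⟨n, hn⟩ := Aux.decompR hp.ne_zero hker r
        have hsplit : a * r * b = a * (n : R) * b + a * (r - (n : R)) * b := by
          noncomm_ring
        rw [hsplit, ← (Nat.cast_commute (α := R) n a).eq, mul_assoc, hab, mul_zero, zero_add]
        exact hsuf _ hn
      by_cases hb2 : b ∈ jacobsonPow R 2
      · intro j hj
        exact k40 _ (Aux.mulK (Aux.mulK ha1 hj rfl) hb2 rfl)
      by_cases ha2 : a ∈ jacobsonPow R 2
      · intro j hj
        exact k40 _ (Aux.mulK (Aux.mulK ha2 hj rfl) hb1 rfl)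
      -- a, b ∈ J \ J²
      obtain ⟨y, hy1, hrep⟩ := Aux.rep hp hker h1' ha1 ha2
      obtain ⟨γ, δ, hw⟩ := hrep b hb1
      set w := b - ((γ.val : ℤ) • a + (δ.val : ℤ) • y) with hwdef
      have hbeq : b = (γ.val : ℤ) • a + (δ.val : ℤ) • y + w := by rw [hwdef]; abel
      have hayb : a * y * b = 0 := by
        by_cases hδ : δ = 0
        · -- b ≡ γ a mod J², γ ≠ 0, a² ∈ J³, reflexivity argument
          rw [hδ] at hbeq
          simp only [ZMod.val_zero, Int.ofNat_zero, Nat.cast_zero, zero_zsmul, add_zero] at hbeq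
          have hγ : γ ≠ 0 := by
            intro h0
            rw [h0] at hbeq
            simp only [ZMod.val_zero, Int.ofNat_zero, Nat.cast_zero, zero_zsmul, zero_add] at hbeq
            exact hb2 (hbeq ▸ hw)
          -- a * a ∈ J³
          have haw : (γ.val : ℤ) • (a * a) = -(a * w) := by
            have h0 : a * b = (γ.val : ℤ) • (a * a) + a * w := by
              rw [hbeq, mul_add, mul_smul_comm]
            rw [hab] at h0
            exact eq_neg_of_add_eq_zero_left h0.symm
          have haa3 : a * a ∈ jacobsonPow R 3 := by
            set η := γ⁻¹ with hη
            have h9 : ((η.val : ℤ) * (γ.val : ℤ)) • (a * a) ∈ jacobsonPow R 3 := by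
              rw [mul_zsmul, haw]
              exact AddSubgroup.zsmul_mem _ (AddSubgroup.neg_mem _ (Aux.mulK ha1 hw rfl)) _
            have h8 : (((η.val : ℤ) * (γ.val : ℤ)) - 1) • (a * a) ∈ jacobsonPow R 3 :=
              Aux.zsmul_memK hker
                (by
                  push_cast [ZMod.natCast_val, ZMod.cast_id]
                  rw [hη, inv_mul_cancel₀ hγ]; ring)
                (Aux.mulK ha1 ha1 rfl) rfl
            have hsplit : a * a = ((η.val : ℤ) * (γ.val : ℤ)) • (a * a)
                - (((η.val : ℤ) * (γ.val : ℤ)) - 1) • (a * a) := by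
              rw [sub_zsmul, one_zsmul]; abel
            rw [hsplit]
            exact AddSubgroup.sub_mem _ h9 h8
          -- reflexivity gives a*y*a = 0
          have hall : ∀ s : R, a * s * (a * y) = 0 := by
            intro s
            obtain ⟨n, hn⟩ := Aux.decompR hp.ne_zero hker s
            have hsplit : a * s * (a * y) = a * (n : R) * (a * y) + a * (s - (n : R)) * (a * y) := by
              noncomm_ring
            have t1 : a * (n : R) * (a * y) = 0 := by
              rw [← (Nat.cast_commute (α := R) n a).eq, mul_assoc, ← mul_assoc a a y,
                k40 _ (Aux.mulK haa3 hy1 rfl), mul_zero]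
            have t2 : a * (s - (n : R)) * (a * y) = 0 := by
              rw [← mul_assoc]
              exact k40 _ (Aux.mulK (Aux.mulK (Aux.mulK ha1 hn rfl) ha1 rfl) hy1 rfl)
            rw [hsplit, t1, t2, add_zero]
          have haya : a * y * a = 0 := by
            have := href a (a * y) hall 1
            rwa [mul_one] at this
          rw [hbeq, mul_add, mul_smul_comm, haya, smul_zero, zero_add]
          exact k40 _ (Aux.mulK (Aux.mulK ha1 hy1 rfl) hw rfl)
        · -- δ invertible : y ≡ δ⁻¹ (b - γ a) mod J²
          set ε := δ⁻¹ with hε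
          have hde : ((ε.val : ℤ) * (δ.val : ℤ)) • y
              = (ε.val : ℤ) • b - ((ε.val : ℤ) * (γ.val : ℤ)) • a - (ε.val : ℤ) • w := by
            have hdy : (δ.val : ℤ) • y = b - (γ.val : ℤ) • a - w := by
              rw [hwdef]; abel
            rw [mul_zsmul, mul_zsmul, hdy, zsmul_sub, zsmul_sub]
          set T := (ε.val : ℤ) • b - ((ε.val : ℤ) * (γ.val : ℤ)) • a with hT
          have hyT : y - T ∈ jacobsonPow R 2 := by
            have h6 : ((1 : ℤ) - (ε.val : ℤ) * (δ.val : ℤ)) • y ∈ jacobsonPow R 2 :=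
              Aux.zsmul_memK hker
                (by
                  push_cast [ZMod.natCast_val, ZMod.cast_id]
                  rw [hε, inv_mul_cancel₀ hδ]; ring)
                hy1 rfl
            have hTeq : T = ((ε.val : ℤ) * (δ.val : ℤ)) • y + (ε.val : ℤ) • w := by
              rw [hde]; abel
            have hsplit : y - T = ((1 : ℤ) - (ε.val : ℤ) * (δ.val : ℤ)) • y
                - (ε.val : ℤ) • w := by
              rw [hTeq, sub_zsmul, one_zsmul]; abel
            rw [hsplit]
            exact AddSubgroup.sub_mem _ h6 (AddSubgroup.zsmul_mem _ hw _)
          have hysplit : y = T + (y - T) := by abel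
          have habb : a * b * b = 0 := by rw [hab, zero_mul]
          have haab : a * a * b = 0 := by rw [mul_assoc, hab, mul_zero]
          have haTb : a * T * b = 0 := by
            rw [hT, mul_sub, sub_mul, mul_smul_comm, mul_smul_comm, smul_mul_assoc,
              smul_mul_assoc, habb, haab, smul_zero, smul_zero, sub_zero]
          rw [hysplit, mul_add, add_mul, haTb, zero_add]
          rw [mul_assoc a (y - T) b, ← mul_assoc]
          exact k40 _ (Aux.mulK (Aux.mulK ha1 hyT rfl) hb1 rfl)
      -- conclude
      intro j hj
      obtain ⟨α, β, hv⟩ := hrep j hj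
      set v := j - ((α.val : ℤ) • a + (β.val : ℤ) • y) with hvdef
      have hjeq : j = (α.val : ℤ) • a + (β.val : ℤ) • y + v := by rw [hvdef]; abel
      have haab : a * a * b = 0 := by rw [mul_assoc, hab, mul_zero]
      have havb : a * v * b = 0 := k40 _ (Aux.mulK (Aux.mulK ha1 hv rfl) hb1 rfl)
      rw [hjeq, mul_add, mul_add, add_mul, add_mul, mul_smul_comm, mul_smul_comm,
        smul_mul_assoc, smul_mul_assoc, haab, hayb, havb, smul_zero, smul_zero]
      simp
    · -- b is a unit, hence a = 0
      set u := (f b)⁻¹ with hu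
      set n := u.val with hn
      set j := b * (n : R) - 1 with hj
      have hj1 : j ∈ jacobsonPow R 1 := by
        refine (Aux.memK1 hker j).2 ?_
        rw [hj, map_sub, map_mul, map_natCast, map_one, hn, ZMod.natCast_val, ZMod.cast_id,
          hu, mul_inv_cancel₀ hfb, sub_self]
      have hj4 : j * j * j * j = 0 :=
        k40 _ (Aux.mulK (Aux.mulK (Aux.mulK hj1 hj1 rfl) hj1 rfl) hj1 rfl)
      have hbn : b * (n : R) = 1 + j := by rw [hj]; abel
      obtain ⟨hinv, _⟩ := Aux.inv_expand hj4
      have hright : b * ((n : R) * (1 - j + j*j - j*j*j)) = 1 := by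
        rw [← mul_assoc, hbn, hinv]
      have ha0 : a = 0 := by
        have := congrArg (fun x => a * x) hright
        simp only [mul_one] at this
        rw [← mul_assoc, ← mul_assoc, hab, zero_mul, zero_mul] at this
        exact this.symm
      rw [ha0, zero_mul, zero_mul]
  · -- a is a unit, hence b = 0
    set u := (f a)⁻¹ with hu
    set n := u.val with hn
    set j := (n : R) * a - 1 with hj
    have hj1 : j ∈ jacobsonPow R 1 := by
      refine (Aux.memK1 hker j).2 ?_
      rw [hj, map_sub, map_mul, map_natCast, map_one, hn, ZMod.natCast_val, ZMod.cast_id,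
        hu, inv_mul_cancel₀ hfa, sub_self]
    have hj4 : j * j * j * j = 0 :=
      k40 _ (Aux.mulK (Aux.mulK (Aux.mulK hj1 hj1 rfl) hj1 rfl) hj1 rfl)
    have hna : (n : R) * a = 1 + j := by rw [hj]; abel
    obtain ⟨_, hinv⟩ := Aux.inv_expand hj4
    have hleft : ((1 - j + j*j - j*j*j) * (n : R)) * a = 1 := by
      rw [mul_assoc, hna, hinv]
    have hb0 : b = 0 := by
      have := congrArg (fun x => x * b) hleft
      simp only [one_mul] at this
      rw [mul_assoc, hab, mul_zero] at this
      exact this.symm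
    rw [hb0, mul_zero]
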